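/- Let g,h,k ∈ G_0 be such that gh, hk and ghk also belong to G_0. Then the cocycle identity Ω_0(g,h) + Ω_0(gh,k) = Ω_0(h,k) + Ω_0(g,hk) holds; equivalently, the multiplication (r,g)·(s,h) = (r + s + Ω_0(g,h), gh) on ℝ × G_0 is associative wherever all the products are defined. -/

import Mathlib

open Complex Matrix Real

noncomputable section

abbrev M2 : Type := Matrix (Fin 2) (Fin 2) ℂ

/-- `G_0`: matrices `!![a,b; 0, conj a]` with `|a| = 1` and `Arg a ∈ (−π/3, π/3)`. -/
def G0 : Set M2 :=
  {m | ∃ a b : ℂ, m = !![a, b; 0, (starRingEnd ℂ) a] ∧ ‖a‖ = 1 ∧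
    Complex.arg a ∈ Set.Ioo (-(π / 3)) (π / 3)}

/-- `Ω_0(g,h) = Im(−b(g)·conj(b(h)) / (a(g)·a(h)))`. -/
def Omega0 (g h : M2) : ℝ :=
  (-(g 0 1) * (starRingEnd ℂ) (h 0 1) / (g 0 0 * h 0 0)).im

/-- for `g,h,k ∈ G_0` with `gh, hk, ghk ∈ G_0`, the cocycle identity
`Ω_0(g,h) + Ω_0(gh,k) = Ω_0(h,k) + Ω_0(g,hk)` holds, i.e. the multiplication
`(r,g)·(s,h) = (r+s+Ω_0(g,h), gh)` on `ℝ × G_0` is associative wherever defined. -/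
theorem statement13 (g h k : M2)
    (hg : g ∈ G0) (hh : h ∈ G0) (hk : k ∈ G0)
    (hgh : g * h ∈ G0) (hhk : h * k ∈ G0) (hghk : g * h * k ∈ G0) :
    Omega0 g h + Omega0 (g * h) k = Omega0 h k + Omega0 g (h * k) := by
  obtain ⟨a1, b1, rfl, ha1, -⟩ := hg
  obtain ⟨a2, b2, rfl, ha2, -⟩ := hh
  obtain ⟨a3, b3, rfl, ha3, -⟩ := hk
  have h1 : a1 ≠ 0 := by intro h; simp [h] at ha1
  have h2 : a2 ≠ 0 := by intro h; simp [h] at ha2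
  have h3 : a3 ≠ 0 := by intro h; simp [h] at ha3
  simp only [Omega0, Matrix.mul_fin_two, Matrix.cons_val_zero, Matrix.cons_val_one,
    Matrix.head_cons, Matrix.cons_val', Matrix.empty_val', Matrix.cons_val_fin_one,
    Matrix.head_fin_const, Matrix.of_apply]
  rw [← Complex.add_im, ← Complex.add_im]
  congr 1
  field_simp
  simp only [map_add, map_mul, Complex.conj_conj]
  ring
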